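/- The operator norm of the Sylvester operator S(X) = AX + XB with respect to the norm ‖X‖_{U,V} = √⟨U⁻¹ X V⁻ᴴ, U⁻¹ X V⁻ᴴ⟩_F equals max over i, j of |α_i + β_j|, where α_i are the eigenvalues of A and β_j the eigenvalues of B. -/

import Mathlib

open Matrix

/-- The Frobenius inner product ⟨X, Y⟩_F = trace(Yᴴ X). -/
noncomputable def froInner {n m : ℕ} (X Y : Matrix (Fin n) (Fin m) ℂ) : ℂ :=
  (Yᴴ * X).trace

/-- The norm ‖X‖_{U,V} = √⟨U⁻¹ X V⁻ᴴ, U⁻¹ X V⁻ᴴ⟩_F. -/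
noncomputable def uvNorm {n m : ℕ} (U : Matrix (Fin n) (Fin n) ℂ)
    (V : Matrix (Fin m) (Fin m) ℂ) (X : Matrix (Fin n) (Fin m) ℂ) : ℝ :=
  Real.sqrt (froInner (U⁻¹ * X * (V⁻¹)ᴴ) (U⁻¹ * X * (V⁻¹)ᴴ)).re

lemma froInner_re {n m : ℕ} (Y : Matrix (Fin n) (Fin m) ℂ) :
    (froInner Y Y).re = ∑ j, ∑ i, Complex.normSq (Y i j) := by
  simp only [froInner, Matrix.trace, Matrix.diag, Matrix.mul_apply,
    Matrix.conjTranspose_apply, Complex.re_sum]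
  congr 1; funext j; congr 1; funext i
  rw [Complex.star_def, ← Complex.normSq_eq_conj_mul_self]
  simp

lemma uvNorm_eq {n m : ℕ} (U : Matrix (Fin n) (Fin n) ℂ)
    (V : Matrix (Fin m) (Fin m) ℂ) (X : Matrix (Fin n) (Fin m) ℂ) :
    uvNorm U V X = Real.sqrt (∑ j, ∑ i, Complex.normSq ((U⁻¹ * X * (V⁻¹)ᴴ) i j)) := by
  rw [uvNorm, froInner_re]

lemma cancelYX {n m : ℕ} (U : Matrix (Fin n) (Fin n) ℂ) (V : Matrix (Fin m) (Fin m) ℂ)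
    (hU : IsUnit U.det) (hV : IsUnit V.det) (Y : Matrix (Fin n) (Fin m) ℂ) :
    U⁻¹ * (U * Y * Vᴴ) * (V⁻¹)ᴴ = Y := by
  have h1 : U⁻¹ * U = 1 := Matrix.nonsing_inv_mul U hU
  have h2 : Vᴴ * (V⁻¹)ᴴ = 1 := by
    rw [← Matrix.conjTranspose_mul, Matrix.nonsing_inv_mul V hV, Matrix.conjTranspose_one]
  calc U⁻¹ * (U * Y * Vᴴ) * (V⁻¹)ᴴ = (U⁻¹ * U) * (Y * (Vᴴ * (V⁻¹)ᴴ)) := by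
        simp only [Matrix.mul_assoc]
    _ = Y := by rw [h1, h2, Matrix.one_mul, Matrix.mul_one]

lemma reconstructX {n m : ℕ} (U : Matrix (Fin n) (Fin n) ℂ) (V : Matrix (Fin m) (Fin m) ℂ)
    (hU : IsUnit U.det) (hV : IsUnit V.det) (X : Matrix (Fin n) (Fin m) ℂ) :
    U * (U⁻¹ * X * (V⁻¹)ᴴ) * Vᴴ = X := by
  have h1 : U * U⁻¹ = 1 := Matrix.mul_nonsing_inv U hU
  have h2 : (V⁻¹)ᴴ * Vᴴ = 1 := by
    rw [← Matrix.conjTranspose_mul, Matrix.mul_nonsing_inv V hV, Matrix.conjTranspose_one]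
  calc U * (U⁻¹ * X * (V⁻¹)ᴴ) * Vᴴ = (U * U⁻¹) * (X * ((V⁻¹)ᴴ * Vᴴ)) := by
        simp only [Matrix.mul_assoc]
    _ = X := by rw [h1, h2, Matrix.one_mul, Matrix.mul_one]

lemma conj_formula {n m : ℕ}
    (A U : Matrix (Fin n) (Fin n) ℂ) (B V : Matrix (Fin m) (Fin m) ℂ)
    (α : Fin n → ℂ) (β : Fin m → ℂ)
    (hU : IsUnit U.det) (hV : IsUnit V.det)
    (hA : A = U * Matrix.diagonal α * U⁻¹)
    (hB : Bᴴ = V * Matrix.diagonal (fun j => starRingEnd ℂ (β j)) * V⁻¹)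
    (X : Matrix (Fin n) (Fin m) ℂ) :
    U⁻¹ * (A * X + X * B) * (V⁻¹)ᴴ =
      Matrix.diagonal α * (U⁻¹ * X * (V⁻¹)ᴴ) + (U⁻¹ * X * (V⁻¹)ᴴ) * Matrix.diagonal β := by
  have hB' : B = (V⁻¹)ᴴ * Matrix.diagonal β * Vᴴ := by
    have hstar : (star fun j => (starRingEnd ℂ) (β j)) = β := by
      funext j; simp
    have := congrArg Matrix.conjTranspose hB
    simpa [Matrix.conjTranspose_mul, Matrix.diagonal_conjTranspose, hstar,
      Matrix.mul_assoc] using this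
  have h1 : U⁻¹ * U = 1 := Matrix.nonsing_inv_mul U hU
  have h2 : Vᴴ * (V⁻¹)ᴴ = 1 := by
    rw [← Matrix.conjTranspose_mul, Matrix.nonsing_inv_mul V hV, Matrix.conjTranspose_one]
  rw [hA, hB']
  rw [Matrix.mul_add, Matrix.add_mul]
  congr 1
  · calc U⁻¹ * (U * Matrix.diagonal α * U⁻¹ * X) * (V⁻¹)ᴴ
        = (U⁻¹ * U) * (Matrix.diagonal α * (U⁻¹ * X * (V⁻¹)ᴴ)) := by
          simp only [Matrix.mul_assoc]
      _ = _ := by rw [h1, Matrix.one_mul]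
  · calc U⁻¹ * (X * ((V⁻¹)ᴴ * Matrix.diagonal β * Vᴴ)) * (V⁻¹)ᴴ
        = (U⁻¹ * X * (V⁻¹)ᴴ) * Matrix.diagonal β * (Vᴴ * (V⁻¹)ᴴ) := by
          simp only [Matrix.mul_assoc]
      _ = _ := by rw [h2, Matrix.mul_one]

lemma entry_formula {n m : ℕ} (α : Fin n → ℂ) (β : Fin m → ℂ)
    (Y : Matrix (Fin n) (Fin m) ℂ) (i : Fin n) (j : Fin m) :
    (Matrix.diagonal α * Y + Y * Matrix.diagonal β) i j = (α i + β j) * Y i j := by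
  simp [Matrix.add_apply, Matrix.diagonal_mul, Matrix.mul_diagonal]
  ring

/-- the operator norm of the Sylvester operator with respect to ‖·‖_{U,V},
i.e. the maximum of ‖S(X)‖_{U,V}/‖X‖_{U,V} over X ≠ 0, equals max_{i,j} |α_i + β_j|. -/
theorem stmt6 {n m : ℕ} (hn : 0 < n) (hm : 0 < m)
    (A U : Matrix (Fin n) (Fin n) ℂ) (B V : Matrix (Fin m) (Fin m) ℂ)
    (α : Fin n → ℂ) (β : Fin m → ℂ)
    (hU : IsUnit U.det) (hV : IsUnit V.det)
    (hA : A = U * Matrix.diagonal α * U⁻¹)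
    (hB : Bᴴ = V * Matrix.diagonal (fun j => starRingEnd ℂ (β j)) * V⁻¹) :
    IsGreatest
      ((fun X : Matrix (Fin n) (Fin m) ℂ => uvNorm U V (A * X + X * B) / uvNorm U V X) ''
        {X | X ≠ 0})
      (⨆ i : Fin n, ⨆ j : Fin m, ‖α i + β j‖) := by
  have ne1 : Nonempty (Fin n) := ⟨⟨0, hn⟩⟩
  have ne2 : Nonempty (Fin m) := ⟨⟨0, hm⟩⟩
  obtain ⟨i₀, hi₀⟩ := Finite.exists_max (fun i => ⨆ j, ‖α i + β j‖)
  obtain ⟨j₀, hj₀⟩ := Finite.exists_max (fun j => ‖α i₀ + β j‖)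
  set M := ‖α i₀ + β j₀‖ with hMdef
  have hMnn : 0 ≤ M := norm_nonneg _
  have hsupi₀ : (⨆ j, ‖α i₀ + β j‖) = M :=
    le_antisymm (ciSup_le hj₀) (le_ciSup (f := fun j => ‖α i₀ + β j‖) (Set.finite_range _).bddAbove j₀)
  have hle : ∀ i j, ‖α i + β j‖ ≤ M := fun i j =>
    le_trans (le_trans (le_ciSup (f := fun j => ‖α i + β j‖) (Set.finite_range _).bddAbove j) (hi₀ i)) hsupi₀.le
  have hsup : (⨆ i, ⨆ j, ‖α i + β j‖) = M := by
    refine le_antisymm (ciSup_le fun i => ciSup_le fun j => hle i j) ?_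
    calc M = ⨆ j, ‖α i₀ + β j‖ := hsupi₀.symm
      _ ≤ ⨆ i, ⨆ j, ‖α i + β j‖ :=
        le_ciSup (f := fun i => ⨆ j, ‖α i + β j‖) (Set.finite_range _).bddAbove i₀
  rw [hsup]
  -- entrywise normSq sum bound
  constructor
  · -- membership
    set E : Matrix (Fin n) (Fin m) ℂ := Matrix.single i₀ j₀ 1 with hE
    set X₀ : Matrix (Fin n) (Fin m) ℂ := U * E * Vᴴ with hX₀
    have hY₀ : U⁻¹ * X₀ * (V⁻¹)ᴴ = E := cancelYX U V hU hV E
    have hEij : ∀ i j, E i j = if i = i₀ ∧ j = j₀ then 1 else 0 := by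
      intro i j
      simp [hE, Matrix.single, and_comm, eq_comm]
    have hX₀ne : X₀ ≠ 0 := by
      intro h
      have : (0 : Matrix (Fin n) (Fin m) ℂ) = E := by
        rw [← hY₀, h]; simp
      have := congrFun (congrFun this i₀) j₀
      rw [hEij i₀ j₀] at this
      simp at this
    refine ⟨X₀, hX₀ne, ?_⟩
    have hnormX₀ : uvNorm U V X₀ = 1 := by
      rw [uvNorm_eq, hY₀]
      have : ∀ i j, Complex.normSq (E i j) = if i = i₀ ∧ j = j₀ then 1 else 0 := by
        intro i j; rw [hEij]; split <;> simp
      simp only [this]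
      rw [show (∑ j, ∑ i, if i = i₀ ∧ j = j₀ then (1:ℝ) else 0) = 1 by
        simp [ite_and, Finset.sum_ite_eq']]
      exact Real.sqrt_one
    have hnormS : uvNorm U V (A * X₀ + X₀ * B) = M := by
      rw [uvNorm_eq, conj_formula A U B V α β hU hV hA hB, hY₀]
      have : ∀ i j, Complex.normSq ((Matrix.diagonal α * E + E * Matrix.diagonal β) i j)
          = if i = i₀ ∧ j = j₀ then Complex.normSq (α i₀ + β j₀) else 0 := by
        intro i j
        rw [entry_formula, hEij]
        rcases Decidable.em (i = i₀ ∧ j = j₀) with ⟨rfl, rfl⟩ | h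
        · simp
        · simp [h]
      simp only [this]
      rw [show (∑ j, ∑ i, if i = i₀ ∧ j = j₀ then Complex.normSq (α i₀ + β j₀) else 0)
          = Complex.normSq (α i₀ + β j₀) by simp [ite_and, Finset.sum_ite_eq']]
      rw [hMdef, Complex.norm_def]
    simp [hnormX₀, hnormS]
  · -- upper bound
    rintro r ⟨X, hX, rfl⟩
    obtain ⟨Y, hY⟩ : ∃ Y, Y = U⁻¹ * X * (V⁻¹)ᴴ := ⟨_, rfl⟩
    have hYne : Y ≠ 0 := by
      intro h
      apply hX
      rw [← reconstructX U V hU hV X, ← hY, h]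
      simp
    obtain ⟨i₁, j₁, hij⟩ : ∃ i j, Y i j ≠ 0 := by
      by_contra hc
      push_neg at hc
      exact hYne (by ext i j; simpa using hc i j)
    obtain ⟨s, hs⟩ : ∃ s, s = ∑ j, ∑ i, Complex.normSq (Y i j) := ⟨_, rfl⟩
    have hspos : 0 < s := by
      have h1 : Complex.normSq (Y i₁ j₁) ≤ ∑ i, Complex.normSq (Y i j₁) :=
        Finset.single_le_sum (f := fun i => Complex.normSq (Y i j₁)) (fun i _ => Complex.normSq_nonneg _) (Finset.mem_univ i₁)
      have h2 : (∑ i, Complex.normSq (Y i j₁)) ≤ s := by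
        rw [hs]
        exact Finset.single_le_sum (f := fun j => ∑ i, Complex.normSq (Y i j))
          (fun j _ => Finset.sum_nonneg fun i _ => Complex.normSq_nonneg _)
          (Finset.mem_univ j₁)
      have := Complex.normSq_pos.mpr hij
      linarith
    have hNX : uvNorm U V X = Real.sqrt s := by rw [uvNorm_eq, hs, hY]
    have hNXpos : 0 < uvNorm U V X := by
      rw [hNX]; exact Real.sqrt_pos.mpr hspos
    have hbound : uvNorm U V (A * X + X * B) ≤ M * Real.sqrt s := by
      rw [uvNorm_eq, conj_formula A U B V α β hU hV hA hB, ← hY]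
      have hterm : ∀ i j, Complex.normSq ((Matrix.diagonal α * Y + Y * Matrix.diagonal β) i j)
          ≤ M ^ 2 * Complex.normSq (Y i j) := by
        intro i j
        rw [entry_formula, Complex.normSq_mul]
        apply mul_le_mul_of_nonneg_right _ (Complex.normSq_nonneg _)
        rw [← Complex.sq_norm]
        exact pow_le_pow_left₀ (norm_nonneg _) (hle i j) 2
      calc Real.sqrt (∑ j, ∑ i,
            Complex.normSq ((Matrix.diagonal α * Y + Y * Matrix.diagonal β) i j))
          ≤ Real.sqrt (∑ j, ∑ i, M ^ 2 * Complex.normSq (Y i j)) := by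
            apply Real.sqrt_le_sqrt
            exact Finset.sum_le_sum fun j _ => Finset.sum_le_sum fun i _ => hterm i j
        _ = M * Real.sqrt s := by
            rw [show (∑ j, ∑ i, M ^ 2 * Complex.normSq (Y i j)) = M ^ 2 * s by
              rw [hs, Finset.mul_sum]; congr 1; funext j; rw [Finset.mul_sum]]
            rw [Real.sqrt_mul (sq_nonneg M), Real.sqrt_sq hMnn]
    rw [div_le_iff₀ hNXpos, hNX]
    exact hbound
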